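/- Let φ be a periodic perfect k-coloring of Ci_∞(D_n) with period t (t even). Then either the sets of colors appearing on even vertices and on odd vertices are disjoint, or for each color c the number of even residues i in {0,...,t-1} with φ(i) = c equals the number of odd residues j in {0,...,t-1} with φ(j) = c. -/

import Mathlib

/-- Neighborhood of `i` in the infinite circulant graph `Ci_∞(D_n)`. -/
noncomputable def nbrs (n : ℕ) (i : ℤ) : Finset ℤ :=
  (Finset.Icc (i - (2*(n:ℤ) - 1)) (i + (2*(n:ℤ) - 1))).filter (fun j => Odd (j - i))

/-- `φ` is a perfect `k`-coloring of `Ci_∞(D_n)` with parameter matrix `M`. -/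
def PerfectK (n k : ℕ) (φ : ℤ → Fin k) (M : Fin k → Fin k → ℕ) : Prop :=
  ∀ i j, ((nbrs n i).filter (fun x => φ x = j)).card = M (φ i) j

lemma mem_nbrs {n : ℕ} {i v : ℤ} :
    v ∈ nbrs n i ↔ (i - (2*(n:ℤ) - 1) ≤ v ∧ v ≤ i + (2*(n:ℤ) - 1)) ∧ Odd (v - i) := by
  simp [nbrs, Finset.mem_filter, Finset.mem_Icc]

lemma nbrs_symm {n : ℕ} {i v : ℤ} : v ∈ nbrs n i ↔ i ∈ nbrs n v := by
  rw [mem_nbrs, mem_nbrs]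
  constructor
  · rintro ⟨hb, ho⟩
    exact ⟨by omega, by rw [show i - v = -(v - i) by ring]; exact ho.neg⟩
  · rintro ⟨hb, ho⟩
    exact ⟨by omega, by rw [show v - i = -(i - v) by ring]; exact ho.neg⟩

lemma nbrs_shift {n : ℕ} (s : ℤ) {i v : ℤ} : v ∈ nbrs n i ↔ v + s ∈ nbrs n (i + s) := by
  rw [mem_nbrs, mem_nbrs, show v + s - (i + s) = v - i by ring]
  constructor <;> rintro ⟨hb, ho⟩ <;> exact ⟨by omega, ho⟩

lemma succ_mem_nbrs {n : ℕ} (hn : 0 < n) (i : ℤ) : i + 1 ∈ nbrs n i := by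
  rw [mem_nbrs]
  exact ⟨by omega, by rw [show i + 1 - i = 1 by ring]; exact odd_one⟩

lemma pred_mem_nbrs {n : ℕ} (hn : 0 < n) (i : ℤ) : i - 1 ∈ nbrs n i := by
  rw [mem_nbrs]
  exact ⟨by omega, by rw [show i - 1 - i = (-1 : ℤ) by ring]; exact ⟨-1, by ring⟩⟩

lemma per_mul {k t : ℕ} {φ : ℤ → Fin k} (hper : ∀ i : ℤ, φ (i + (t:ℤ)) = φ i) :
    ∀ (m x : ℤ), φ (x + m * t) = φ x := by
  intro m
  induction m using Int.induction_on with
  | zero => intro x; simp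
  | succ m ih =>
      intro x
      rw [show x + ((m:ℤ)+1) * t = (x + m * t) + t by ring, hper, ih]
  | pred m ih =>
      intro x
      have h2 := hper ((x + (-(m:ℤ)) * t) - t)
      rw [show x + (-(m:ℤ)) * t - t + t = x + (-(m:ℤ)) * t by ring] at h2
      rw [show x + (-(m:ℤ)-1) * t = (x + (-(m:ℤ)) * t) - t by ring, ← h2, ih]

lemma roundtrip {t : ℕ} {u v : ℤ} (hu0 : 0 ≤ u) (hut : u < (t:ℤ)) :
    (⟨(u + (v % (t:ℤ) - v)) % (t:ℤ),
      v % (t:ℤ) + ((u + (v % (t:ℤ) - v)) % (t:ℤ) - (u + (v % (t:ℤ) - v)))⟩ : (_ : ℤ) × ℤ)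
      = ⟨u, v⟩ := by
  have hfst : (u + (v % (t:ℤ) - v)) % (t:ℤ) = u := by
    rw [show u + (v % (t:ℤ) - v) = u + (t:ℤ) * (-(v / t)) by rw [Int.emod_def]; ring,
      Int.add_mul_emod_self_left, Int.emod_eq_of_lt hu0 hut]
  rw [hfst]
  exact congrArg (Sigma.mk u) (by ring)

lemma DC {n k t : ℕ} (hn : 0 < n) (ht : 0 < t) (hte : Even t)
    {φ : ℤ → Fin k} {M : Fin k → Fin k → ℕ} (hφ : PerfectK n k φ M)
    (hper : ∀ i : ℤ, φ (i + (t:ℤ)) = φ i) (c d : Fin k) :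
    ((Finset.Ico (0:ℤ) (t:ℤ)).filter (fun u => Even u ∧ φ u = c)).card * M c d =
    ((Finset.Ico (0:ℤ) (t:ℤ)).filter (fun v => Odd v ∧ φ v = d)).card * M d c := by
  classical
  have per' := per_mul hper
  have htZ : (0:ℤ) < t := by exact_mod_cast ht
  have hteZ : Even (t:ℤ) := (Int.even_coe_nat t).mpr hte
  have h1 : (((Finset.Ico (0:ℤ) (t:ℤ)).filter (fun u => Even u ∧ φ u = c)).sigma
      (fun u => (nbrs n u).filter (fun v => φ v = d))).card
      = ((Finset.Ico (0:ℤ) (t:ℤ)).filter (fun u => Even u ∧ φ u = c)).card * M c d := by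
    rw [Finset.card_sigma]
    have hterm : ∀ u ∈ (Finset.Ico (0:ℤ) (t:ℤ)).filter (fun u => Even u ∧ φ u = c),
        ((nbrs n u).filter (fun v => φ v = d)).card = M c d := by
      intro u hu
      have hc : φ u = c := (Finset.mem_filter.mp hu).2.2
      rw [hφ u d, hc]
    rw [Finset.sum_congr rfl hterm, Finset.sum_const, smul_eq_mul]
  have h2 : (((Finset.Ico (0:ℤ) (t:ℤ)).filter (fun v => Odd v ∧ φ v = d)).sigma
      (fun v => (nbrs n v).filter (fun u => φ u = c))).card
      = ((Finset.Ico (0:ℤ) (t:ℤ)).filter (fun v => Odd v ∧ φ v = d)).card * M d c := by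
    rw [Finset.card_sigma]
    have hterm : ∀ v ∈ (Finset.Ico (0:ℤ) (t:ℤ)).filter (fun v => Odd v ∧ φ v = d),
        ((nbrs n v).filter (fun u => φ u = c)).card = M d c := by
      intro v hv
      have hd : φ v = d := (Finset.mem_filter.mp hv).2.2
      rw [hφ v c, hd]
    rw [Finset.sum_congr rfl hterm, Finset.sum_const, smul_eq_mul]
  rw [← h1, ← h2]
  refine Finset.card_bij'
    (fun p _ => ⟨p.2 % (t:ℤ), p.1 + (p.2 % (t:ℤ) - p.2)⟩)
    (fun q _ => ⟨q.2 % (t:ℤ), q.1 + (q.2 % (t:ℤ) - q.2)⟩) ?_ ?_ ?_ ?_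
  · rintro ⟨u, v⟩ hp
    dsimp only
    rw [Finset.mem_sigma] at hp
    obtain ⟨hu, hv⟩ := hp
    dsimp only at hu hv ⊢
    rw [Finset.mem_filter, Finset.mem_Ico] at hu
    rw [Finset.mem_filter] at hv
    obtain ⟨⟨hu0, hut⟩, huE, huc⟩ := hu
    obtain ⟨hvn, hvd⟩ := hv
    rw [Finset.mem_sigma]
    constructor
    · rw [Finset.mem_filter, Finset.mem_Ico]
      refine ⟨⟨Int.emod_nonneg v (by omega), Int.emod_lt_of_pos v htZ⟩, ?_, ?_⟩
      · have hOv : Odd v := by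
          have h1 : Odd (v - u) := (mem_nbrs.mp hvn).2
          rw [show v = (v - u) + u by ring]
          exact h1.add_even huE
        rw [Int.emod_def]
        exact hOv.sub_even (hteZ.mul_right _)
      · rw [show v % (t:ℤ) = v + (-(v / t)) * t by rw [Int.emod_def]; ring, per', hvd]
    · rw [Finset.mem_filter]
      constructor
      · have h := (nbrs_shift (n := n) (v % (t:ℤ) - v) (i := v) (v := u)).mp
          (nbrs_symm.mp hvn)
        rwa [show v + (v % (t:ℤ) - v) = v % (t:ℤ) by ring] at h
      · rw [show u + (v % (t:ℤ) - v) = u + (-(v / t)) * t by rw [Int.emod_def]; ring,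
          per', huc]
  · rintro ⟨v, u⟩ hp
    dsimp only
    rw [Finset.mem_sigma] at hp
    obtain ⟨hv, hu⟩ := hp
    dsimp only at hv hu ⊢
    rw [Finset.mem_filter, Finset.mem_Ico] at hv
    rw [Finset.mem_filter] at hu
    obtain ⟨⟨hv0, hvt⟩, hvO, hvd⟩ := hv
    obtain ⟨hun, huc⟩ := hu
    rw [Finset.mem_sigma]
    constructor
    · rw [Finset.mem_filter, Finset.mem_Ico]
      refine ⟨⟨Int.emod_nonneg u (by omega), Int.emod_lt_of_pos u htZ⟩, ?_, ?_⟩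
      · have hEu : Even u := by
          have h1 : Odd (u - v) := (mem_nbrs.mp hun).2
          rw [show u = (u - v) + v by ring]
          exact h1.add_odd hvO
        rw [Int.emod_def]
        exact hEu.sub (hteZ.mul_right _)
      · rw [show u % (t:ℤ) = u + (-(u / t)) * t by rw [Int.emod_def]; ring, per', huc]
    · rw [Finset.mem_filter]
      constructor
      · have h := (nbrs_shift (n := n) (u % (t:ℤ) - u) (i := u) (v := v)).mp
          (nbrs_symm.mp hun)
        rwa [show u + (u % (t:ℤ) - u) = u % (t:ℤ) by ring] at h
      · rw [show v + (u % (t:ℤ) - u) = v + (-(u / t)) * t by rw [Int.emod_def]; ring,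
          per', hvd]
  · rintro ⟨u, v⟩ hp
    dsimp only
    rw [Finset.mem_sigma] at hp
    obtain ⟨hu, -⟩ := hp
    dsimp only at hu ⊢
    rw [Finset.mem_filter, Finset.mem_Ico] at hu
    exact roundtrip hu.1.1 hu.1.2
  · rintro ⟨v, u⟩ hp
    dsimp only
    rw [Finset.mem_sigma] at hp
    obtain ⟨hv, -⟩ := hp
    dsimp only at hv ⊢
    rw [Finset.mem_filter, Finset.mem_Ico] at hv
    exact roundtrip hv.1.1 hv.1.2

lemma pos_left {a b : ℕ} (h : 0 < a * b) : 0 < a := by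
  rcases Nat.eq_zero_or_pos a with h0 | h0
  · simp [h0] at h
  · exact h0

lemma countE {k : ℕ} (t : ℕ) (φ : ℤ → Fin k) (c : Fin k) :
    ((Finset.range t).filter (fun i : ℕ => Even i ∧ φ (i : ℤ) = c)).card =
    ((Finset.Ico (0:ℤ) (t:ℤ)).filter (fun u => Even u ∧ φ u = c)).card := by
  refine Finset.card_bij' (fun i _ => (i:ℤ)) (fun x _ => x.toNat) ?_ ?_ ?_ ?_
  · intro a ha
    simp only [Finset.mem_filter, Finset.mem_range] at ha
    simp only [Finset.mem_filter, Finset.mem_Ico]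
    exact ⟨⟨Int.natCast_nonneg a, by exact_mod_cast ha.1⟩,
      (Int.even_coe_nat a).mpr ha.2.1, ha.2.2⟩
  · intro x hx
    simp only [Finset.mem_filter, Finset.mem_Ico] at hx
    simp only [Finset.mem_filter, Finset.mem_range]
    obtain ⟨⟨h0, hlt⟩, hev, hc⟩ := hx
    have hcast : ((x.toNat : ℤ)) = x := Int.toNat_of_nonneg h0
    refine ⟨by omega, ?_, by rw [hcast]; exact hc⟩
    rw [← Int.even_coe_nat, hcast]; exact hev
  · intro a _; simp
  · intro x hx
    simp only [Finset.mem_filter, Finset.mem_Ico] at hx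
    exact Int.toNat_of_nonneg hx.1.1

lemma countO {k : ℕ} (t : ℕ) (φ : ℤ → Fin k) (c : Fin k) :
    ((Finset.range t).filter (fun i : ℕ => Odd i ∧ φ (i : ℤ) = c)).card =
    ((Finset.Ico (0:ℤ) (t:ℤ)).filter (fun u => Odd u ∧ φ u = c)).card := by
  refine Finset.card_bij' (fun i _ => (i:ℤ)) (fun x _ => x.toNat) ?_ ?_ ?_ ?_
  · intro a ha
    simp only [Finset.mem_filter, Finset.mem_range] at ha
    simp only [Finset.mem_filter, Finset.mem_Ico]
    exact ⟨⟨Int.natCast_nonneg a, by exact_mod_cast ha.1⟩,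
      (Int.odd_coe_nat a).mpr ha.2.1, ha.2.2⟩
  · intro x hx
    simp only [Finset.mem_filter, Finset.mem_Ico] at hx
    simp only [Finset.mem_filter, Finset.mem_range]
    obtain ⟨⟨h0, hlt⟩, hod, hc⟩ := hx
    have hcast : ((x.toNat : ℤ)) = x := Int.toNat_of_nonneg h0
    refine ⟨by omega, ?_, by rw [hcast]; exact hc⟩
    rw [← Int.odd_coe_nat, hcast]; exact hod
  · intro a _; simp
  · intro x hx
    simp only [Finset.mem_filter, Finset.mem_Ico] at hx
    exact Int.toNat_of_nonneg hx.1.1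

/-- For a periodic perfect `k`-coloring of `Ci_∞(D_n)` with even period `t`:
either the colors on even and odd vertices are disjoint, or each color appears
equally often among even and odd residues of one period. -/
theorem bipartite_or_balanced (n k t : ℕ) (hn : 0 < n) (hk : 0 < k)
    (ht : 0 < t) (hte : Even t)
    (φ : ℤ → Fin k) (M : Fin k → Fin k → ℕ) (hφ : PerfectK n k φ M)
    (hper : ∀ i : ℤ, φ (i + (t:ℤ)) = φ i) :
    (∀ i j : ℤ, Even i → Odd j → φ i ≠ φ j) ∨
    (∀ c : Fin k,
      ((Finset.range t).filter (fun i : ℕ => Even i ∧ φ (i : ℤ) = c)).card =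
      ((Finset.range t).filter (fun i : ℕ => Odd i ∧ φ (i : ℤ) = c)).card) := by
  classical
  by_cases hdisj : ∀ i j : ℤ, Even i → Odd j → φ i ≠ φ j
  · exact Or.inl hdisj
  right
  push_neg at hdisj
  obtain ⟨i₀, j₀, hEi₀, hOj₀, hij⟩ := hdisj
  have per' := per_mul hper
  have htZ : (0:ℤ) < t := by exact_mod_cast ht
  have hteZ : Even (t:ℤ) := (Int.even_coe_nat t).mpr hte
  set eC : Fin k → ℕ :=
    fun c => ((Finset.Ico (0:ℤ) (t:ℤ)).filter (fun u => Even u ∧ φ u = c)).card with heC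
  set oC : Fin k → ℕ :=
    fun c => ((Finset.Ico (0:ℤ) (t:ℤ)).filter (fun v => Odd v ∧ φ v = c)).card with hoC
  have A : ∀ c d, eC c * M c d = oC d * M d c := fun c d => DC hn ht hte hφ hper c d
  -- positivity of parity counts at occupied colors
  have epos : ∀ x : ℤ, Even x → 0 < eC (φ x) := by
    intro x hx
    apply Finset.card_pos.mpr
    refine ⟨x % (t:ℤ), Finset.mem_filter.mpr ⟨Finset.mem_Ico.mpr
      ⟨Int.emod_nonneg x (by omega), Int.emod_lt_of_pos x htZ⟩, ?_, ?_⟩⟩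
    · rw [Int.emod_def]; exact hx.sub (hteZ.mul_right _)
    · rw [show x % (t:ℤ) = x + (-(x / t)) * t by rw [Int.emod_def]; ring, per']
  have opos : ∀ x : ℤ, Odd x → 0 < oC (φ x) := by
    intro x hx
    apply Finset.card_pos.mpr
    refine ⟨x % (t:ℤ), Finset.mem_filter.mpr ⟨Finset.mem_Ico.mpr
      ⟨Int.emod_nonneg x (by omega), Int.emod_lt_of_pos x htZ⟩, ?_, ?_⟩⟩
    · rw [Int.emod_def]; exact hx.sub_even (hteZ.mul_right _)
    · rw [show x % (t:ℤ) = x + (-(x / t)) * t by rw [Int.emod_def]; ring, per']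
  have Mpos1 : ∀ x : ℤ, 0 < M (φ x) (φ (x+1)) := by
    intro x
    rw [← hφ x (φ (x+1))]
    exact Finset.card_pos.mpr ⟨x+1, Finset.mem_filter.mpr ⟨succ_mem_nbrs hn x, rfl⟩⟩
  have Mpos2 : ∀ x : ℤ, 0 < M (φ x) (φ (x-1)) := by
    intro x
    rw [← hφ x (φ (x-1))]
    exact Finset.card_pos.mpr ⟨x-1, Finset.mem_filter.mpr ⟨pred_mem_nbrs hn x, rfl⟩⟩
  -- combined step relation
  have hS : ∀ x : ℤ, eC (φ x) * eC (φ (x+1)) = oC (φ x) * oC (φ (x+1)) := by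
    intro x
    apply Nat.eq_of_mul_eq_mul_right (Mpos1 x)
    calc eC (φ x) * eC (φ (x+1)) * M (φ x) (φ (x+1))
        = eC (φ (x+1)) * (eC (φ x) * M (φ x) (φ (x+1))) := by ring
      _ = eC (φ (x+1)) * (oC (φ (x+1)) * M (φ (x+1)) (φ x)) := by rw [A (φ x) (φ (x+1))]
      _ = oC (φ (x+1)) * (eC (φ (x+1)) * M (φ (x+1)) (φ x)) := by ring
      _ = oC (φ (x+1)) * (oC (φ x) * M (φ x) (φ (x+1))) := by rw [A (φ (x+1)) (φ x)]
      _ = oC (φ x) * oC (φ (x+1)) * M (φ x) (φ (x+1)) := by ring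
  -- positivity everywhere
  have pos_all : ∀ x : ℤ, 0 < eC (φ x) ∧ 0 < oC (φ x) := by
    intro x
    induction x using Int.inductionOn' with
    | b => exact i₀
    | zero => exact ⟨epos i₀ hEi₀, by rw [hij]; exact opos j₀ hOj₀⟩
    | succ y hy ih =>
        obtain ⟨he, ho⟩ := ih
        constructor
        · -- eC (φ (y+1)) from A (φ(y+1)) (φ y)
          have h := A (φ (y+1)) (φ y)
          have hpos : 0 < oC (φ y) * M (φ y) (φ (y+1)) := Nat.mul_pos ho (Mpos1 y)
          rw [← h] at hpos
          exact pos_left hpos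
        · have h := A (φ y) (φ (y+1))
          have hpos : 0 < eC (φ y) * M (φ y) (φ (y+1)) := Nat.mul_pos he (Mpos1 y)
          rw [h] at hpos
          exact pos_left hpos
    | pred y hy ih =>
        obtain ⟨he, ho⟩ := ih
        constructor
        · have h := A (φ (y-1)) (φ y)
          have hpos : 0 < oC (φ y) * M (φ y) (φ (y-1)) := Nat.mul_pos ho (Mpos2 y)
          rw [← h] at hpos
          exact pos_left hpos
        · have h := A (φ y) (φ (y-1))
          have hpos : 0 < eC (φ y) * M (φ y) (φ (y-1)) := Nat.mul_pos he (Mpos2 y)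
          rw [h] at hpos
          exact pos_left hpos
  set A0 := eC (φ i₀) with hA0
  set B0 := oC (φ i₀) with hB0
  -- parity invariant
  have inv : ∀ x : ℤ, (Even (x - i₀) → eC (φ x) * B0 = oC (φ x) * A0) ∧
      (Odd (x - i₀) → eC (φ x) * A0 = oC (φ x) * B0) := by
    intro x
    induction x using Int.inductionOn' with
    | b => exact i₀
    | zero =>
        constructor
        · intro _; exact mul_comm _ _
        · intro hodd
          rw [sub_self, Int.odd_iff] at hodd
          omega
    | succ y hy ih =>
        have S := hS y
        have hpe := (pos_all y).1
        have hpo := (pos_all y).2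
        constructor
        · intro hEv
          have hOdd : Odd (y - i₀) := by
            rw [Int.even_iff] at hEv; rw [Int.odd_iff]; omega
          have H := ih.2 hOdd
          apply Nat.eq_of_mul_eq_mul_right hpe
          calc eC (φ (y+1)) * B0 * eC (φ y)
              = B0 * (eC (φ y) * eC (φ (y+1))) := by ring
            _ = B0 * (oC (φ y) * oC (φ (y+1))) := by rw [S]
            _ = oC (φ (y+1)) * (oC (φ y) * B0) := by ring
            _ = oC (φ (y+1)) * (eC (φ y) * A0) := by rw [← H]
            _ = oC (φ (y+1)) * A0 * eC (φ y) := by ring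
        · intro hOd
          have hEv : Even (y - i₀) := by
            rw [Int.odd_iff] at hOd; rw [Int.even_iff]; omega
          have H := ih.1 hEv
          apply Nat.eq_of_mul_eq_mul_right hpo
          calc eC (φ (y+1)) * A0 * oC (φ y)
              = eC (φ (y+1)) * (oC (φ y) * A0) := by ring
            _ = eC (φ (y+1)) * (eC (φ y) * B0) := by rw [← H]
            _ = B0 * (eC (φ y) * eC (φ (y+1))) := by ring
            _ = B0 * (oC (φ y) * oC (φ (y+1))) := by rw [S]
            _ = oC (φ (y+1)) * B0 * oC (φ y) := by ring
    | pred y hy ih =>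
        have S : eC (φ (y-1)) * eC (φ y) = oC (φ (y-1)) * oC (φ y) := by
          have h := hS (y-1)
          rwa [show y - 1 + 1 = y by ring] at h
        have hpe := (pos_all y).1
        have hpo := (pos_all y).2
        constructor
        · intro hEv
          have hOdd : Odd (y - i₀) := by
            rw [Int.even_iff] at hEv; rw [Int.odd_iff]; omega
          have H := ih.2 hOdd
          apply Nat.eq_of_mul_eq_mul_right hpo
          calc eC (φ (y-1)) * B0 * oC (φ y)
              = eC (φ (y-1)) * (oC (φ y) * B0) := by ring
            _ = eC (φ (y-1)) * (eC (φ y) * A0) := by rw [← H]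
            _ = A0 * (eC (φ (y-1)) * eC (φ y)) := by ring
            _ = A0 * (oC (φ (y-1)) * oC (φ y)) := by rw [S]
            _ = oC (φ (y-1)) * A0 * oC (φ y) := by ring
        · intro hOd
          have hEv : Even (y - i₀) := by
            rw [Int.odd_iff] at hOd; rw [Int.even_iff]; omega
          have H := ih.1 hEv
          apply Nat.eq_of_mul_eq_mul_right hpe
          calc eC (φ (y-1)) * A0 * eC (φ y)
              = A0 * (eC (φ (y-1)) * eC (φ y)) := by ring
            _ = A0 * (oC (φ (y-1)) * oC (φ y)) := by rw [S]
            _ = oC (φ (y-1)) * (oC (φ y) * A0) := by ring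
            _ = oC (φ (y-1)) * (eC (φ y) * B0) := by rw [← H]
            _ = oC (φ (y-1)) * B0 * eC (φ y) := by ring
  -- the collision forces A0 = B0
  have hAB : A0 = B0 := by
    have hOdd : Odd (j₀ - i₀) := hOj₀.sub_even hEi₀
    have H := (inv j₀).2 hOdd
    rw [← hij] at H
    exact Nat.mul_self_inj.mp H
  -- hence balance everywhere
  have key : ∀ x : ℤ, eC (φ x) = oC (φ x) := by
    intro x
    have hp := pos_all i₀
    rcases Int.even_or_odd (x - i₀) with he | ho
    · have H := (inv x).1 he
      rw [← hAB] at H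
      exact Nat.eq_of_mul_eq_mul_right hp.1 H
    · have H := (inv x).2 ho
      rw [hAB] at H
      exact Nat.eq_of_mul_eq_mul_right hp.2 H
  intro c
  rw [countE t φ c, countO t φ c]
  by_cases hc : ∃ x : ℤ, φ x = c
  · obtain ⟨x, hx⟩ := hc
    have h := key x
    rw [hx] at h
    exact h
  · push_neg at hc
    rw [Finset.filter_false_of_mem (fun u _ => by simp [hc u]),
      Finset.filter_false_of_mem (fun u _ => by simp [hc u])]
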